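/- Let $V_1,\ldots,V_{n+1}$ be exchangeable random variables, and for each $i$ let $v^*_i$ be a statistic that is equivariant under permutations in the following sense: for any permutation $\sigma$, the value of $v^*_i$ computed from the permuted data $(V_{\sigma(1)},\ldots,V_{\sigma(n+1)})$ equals $v^*_{\sigma(i)}$ computed from the original data. If almost surely $\frac{1}{n+1}\sum_{i=1}^{n+1}\mathbb{1}\{V_i \le v^*_i\} \ge \alpha$, then $\mathbb{P}\{V_{n+1} \le v^*_{n+1}\} \ge \alpha$. -/

import Mathlib

open MeasureTheory Finset

/-- Abstract Corollary 1 / Theorem 3: exchangeable scores plus permutation-equivariant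
thresholds `v*_i` with a.s. weighted-average coverage `≥ α` imply
`P(V_{n+1} ≤ v*_{n+1}) ≥ α`. -/
theorem stmt_10 {Ω : Type*} [MeasurableSpace Ω] (ℙ : Measure Ω) [IsProbabilityMeasure ℙ]
    (n : ℕ) (V : Fin (n + 1) → Ω → ℝ) (hmeas : ∀ i, Measurable (V i))
    (hexch : ∀ σ : Equiv.Perm (Fin (n + 1)),
      Measure.map (fun ω => fun i => V (σ i) ω) ℙ
        = Measure.map (fun ω => fun i => V i ω) ℙ)
    (vstar : Fin (n + 1) → (Fin (n + 1) → ℝ) → ℝ)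
    (hvmeas : ∀ i, Measurable (vstar i))
    (hequiv : ∀ (σ : Equiv.Perm (Fin (n + 1))) (x : Fin (n + 1) → ℝ) (i : Fin (n + 1)),
      vstar i (fun j => x (σ j)) = vstar (σ i) x)
    (α : ℝ) (hα : α ∈ Set.Ioo (0:ℝ) 1)
    (hcov : ∀ᵐ ω ∂ℙ,
      α ≤ (1 / (n + 1 : ℝ)) * ∑ i,
        (if V i ω ≤ vstar i (fun j => V j ω) then (1 : ℝ) else 0)) :
    ENNReal.ofReal α
      ≤ ℙ {ω | V (Fin.last n) ω ≤ vstar (Fin.last n) (fun j => V j ω)} := by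
  classical
  set X : Ω → Fin (n + 1) → ℝ := fun ω i => V i ω with hXdef
  have hXmeas : Measurable X := measurable_pi_lambda _ hmeas
  set S : Fin (n + 1) → Set (Fin (n + 1) → ℝ) := fun k => {x | x k ≤ vstar k x} with hSdef
  have hSmeas : ∀ k, MeasurableSet (S k) := fun k =>
    measurableSet_le (measurable_pi_apply k) (hvmeas k)
  have hAmeas : ∀ i, MeasurableSet (X ⁻¹' S i) := fun i => hXmeas (hSmeas i)
  -- all events have the same probability
  have hAeq : ∀ i, ℙ (X ⁻¹' S i) = ℙ (X ⁻¹' S (Fin.last n)) := by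
    intro i
    set σ := Equiv.swap i (Fin.last n) with hσ
    have hXσmeas : Measurable (fun ω => fun j => V (σ j) ω) :=
      measurable_pi_lambda _ fun j => hmeas (σ j)
    have h1 : ℙ (X ⁻¹' S i)
        = ℙ ((fun ω => fun j => V (σ j) ω) ⁻¹' S i) := by
      have := hexch σ
      rw [← Measure.map_apply hXmeas (hSmeas i), ← this,
        Measure.map_apply hXσmeas (hSmeas i)]
    have h2 : (fun ω => fun j => V (σ j) ω) ⁻¹' S i = X ⁻¹' S (σ i) := by
      ext ω
      simp only [Set.mem_preimage, hSdef, Set.mem_setOf_eq]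
      have := hequiv σ (X ω) i
      simp only [hXdef] at this
      constructor
      · intro h
        simpa [this] using h
      · intro h
        simpa [this] using h
    rw [h1, h2, hσ, Equiv.swap_apply_left]
  set p : ℝ := (ℙ (X ⁻¹' S (Fin.last n))).toReal with hp
  -- the indicator functions
  have hfeq : ∀ i, (fun ω => if V i ω ≤ vstar i (fun j => V j ω) then (1 : ℝ) else 0)
      = (X ⁻¹' S i).indicator (fun _ => (1 : ℝ)) := by
    intro i; funext ω
    simp [Set.indicator_apply, Set.mem_preimage, hSdef, hXdef]
  have hfint : ∀ i, Integrable
      (fun ω => if V i ω ≤ vstar i (fun j => V j ω) then (1 : ℝ) else 0) ℙ := by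
    intro i
    rw [hfeq i]
    exact (integrable_const (1 : ℝ)).indicator (hAmeas i)
  have hfintegral : ∀ i,
      ∫ ω, (if V i ω ≤ vstar i (fun j => V j ω) then (1 : ℝ) else 0) ∂ℙ = p := by
    intro i
    rw [hfeq i, integral_indicator_const (1 : ℝ) (hAmeas i), measureReal_def, hAeq i]
    simp [hp]
  -- integrate the a.s. coverage bound
  have hle : α ≤ p := by
    have h1 : α ≤ ∫ ω, (1 / (n + 1 : ℝ)) * ∑ i,
        (if V i ω ≤ vstar i (fun j => V j ω) then (1 : ℝ) else 0) ∂ℙ := by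
      have := integral_mono_ae (integrable_const α)
        (((integrable_finset_sum univ fun i _ => hfint i).const_mul _)) hcov
      simpa using this
    have h2 : ∫ ω, (1 / (n + 1 : ℝ)) * ∑ i,
        (if V i ω ≤ vstar i (fun j => V j ω) then (1 : ℝ) else 0) ∂ℙ = p := by
      rw [integral_const_mul, integral_finset_sum univ fun i _ => hfint i]
      simp only [hfintegral]
      rw [Finset.sum_const, Finset.card_univ, Fintype.card_fin, nsmul_eq_mul, Nat.cast_add, Nat.cast_one]
      have hne : (n + 1 : ℝ) ≠ 0 := by positivity
      field_simp
    linarith [h1, h2.symm.le, h2.le]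
  have : ENNReal.ofReal α ≤ ENNReal.ofReal p := ENNReal.ofReal_le_ofReal hle
  calc ENNReal.ofReal α ≤ ENNReal.ofReal p := this
    _ = ℙ (X ⁻¹' S (Fin.last n)) := by
        rw [hp, ENNReal.ofReal_toReal (measure_ne_top _ _)]
    _ = ℙ {ω | V (Fin.last n) ω ≤ vstar (Fin.last n) (fun j => V j ω)} := rfl
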